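/- Let V be a finite set, let G be a simple graph on V, and let A be a Hermitian matrix with rows and columns indexed by V such that A(u,v) = 0 whenever u ≠ v and u, v are not adjacent in G, and A(v,v) = 0 for every vertex v. Let n₊, n₋, n₀ denote the number of positive, negative and zero eigenvalues of A respectively, counted with multiplicity. Then the independence number of G satisfies α(G) ≤ min(n₊, n₋) + n₀. -/

import Mathlib

open Finset Matrix

/-- The independence number of a graph: the supremum of sizes of independent sets. -/
noncomputable def alphaNum {V : Type*} (G : SimpleGraph V) : ℕ :=
  sSup {k | ∃ s : Finset V, (∀ u ∈ s, ∀ v ∈ s, ¬ G.Adj u v) ∧ s.card = k}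

lemma aux_inertia {V : Type*} [Fintype V] [DecidableEq V]
    (A : Matrix V V ℂ) (μ : V → ℝ) (u : OrthonormalBasis V ℂ (EuclideanSpace ℂ V))
    (hu : ∀ i, Matrix.toEuclideanLin A (u i) = (μ i : ℂ) • u i)
    (s : Finset V) (hs : ∀ a ∈ s, ∀ b ∈ s, A a b = 0) :
    s.card ≤ (Finset.univ.filter fun i => 0 ≤ μ i).card := by
  classical
  set I := Finset.univ.filter fun i => 0 ≤ μ i with hI
  let xof : (↥s → ℂ) → (EuclideanSpace ℂ V) := fun c => WithLp.toLp 2 (fun w => if h : w ∈ s then c ⟨w, h⟩ else 0)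
  have hxadd : ∀ c c', xof (c + c') = xof c + xof c' := by
    intro c c'; ext w; simp only [xof]; by_cases h : w ∈ s <;> simp [h]
  have hxsmul : ∀ (a : ℂ) c, xof (a • c) = a • xof c := by
    intro a c; ext w; simp only [xof]; by_cases h : w ∈ s <;> simp [h]
  let T : (↥s → ℂ) →ₗ[ℂ] (↥I → ℂ) :=
    { toFun := fun c j => inner (𝕜 := ℂ) (u j) (xof c)
      map_add' := by intro c c'; funext j; simp [hxadd, inner_add_right]
      map_smul' := by intro a c; funext j; simp [hxsmul, inner_smul_right] }
  have hinj : Function.Injective T := by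
    rw [injective_iff_map_eq_zero]
    intro c hc
    set x : EuclideanSpace ℂ V := xof c with hx
    set d : V → ℂ := fun j => inner (𝕜 := ℂ) (u j) x with hd
    have h0 : ∀ j, 0 ≤ μ j → d j = 0 := by
      intro j hj
      have : T c ⟨j, by simp [hI, hj]⟩ = 0 := by rw [hc]; rfl
      exact this
    -- x as combination of eigenvectors
    have hxsum : x = ∑ j, d j • u j := by
      simp_rw [hd]
      exact (u.sum_repr' x).symm
    have hAx : Matrix.toEuclideanLin A x = ∑ j, ((μ j : ℂ) * d j) • u j := by
      conv_lhs => rw [hxsum]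
      rw [map_sum]
      refine Finset.sum_congr rfl fun j _ => ?_
      rw [_root_.map_smul, hu j, smul_smul, mul_comm]
    -- entrywise description of toEuclideanLin
    have hentry : ∀ w, Matrix.toEuclideanLin A x w = ∑ w', A w w' * x w' := by
      intro w
      rfl
    -- the quadratic form vanishes on x
    have hQ0 : inner (𝕜 := ℂ) x (Matrix.toEuclideanLin A x) = 0 := by
      rw [PiLp.inner_apply]
      refine Finset.sum_eq_zero fun w _ => ?_
      by_cases hw : w ∈ s
      · have hz : Matrix.toEuclideanLin A x w = 0 := by
          rw [hentry]
          refine Finset.sum_eq_zero fun w' _ => ?_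
          by_cases hw' : w' ∈ s
          · rw [hs w hw w' hw', zero_mul]
          · have : x w' = 0 := by simp [hx, xof, hw']
            rw [this, mul_zero]
        rw [hz, inner_zero_right]
      · have : x w = 0 := by simp [hx, xof, hw]
        rw [this, inner_zero_left]
    have hQ : inner (𝕜 := ℂ) x (Matrix.toEuclideanLin A x)
        = ((∑ j, μ j * Complex.normSq (d j) : ℝ) : ℂ) := by
      rw [hAx, inner_sum]
      push_cast
      refine Finset.sum_congr rfl fun j _ => ?_
      rw [inner_smul_right]
      have h1 : inner (𝕜 := ℂ) x (u j) = starRingEnd ℂ (d j) := by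
        rw [hd, ← inner_conj_symm]
      rw [h1, mul_assoc, Complex.mul_conj]
    have hsum0 : (∑ j, μ j * Complex.normSq (d j)) = 0 := by
      have h2 := hQ0.symm.trans hQ
      exact_mod_cast h2.symm
    have hterm : ∀ j ∈ Finset.univ, μ j * Complex.normSq (d j) = 0 := by
      rw [← Finset.sum_eq_zero_iff_of_nonpos]
      · exact hsum0
      · intro j _
        by_cases hj : 0 ≤ μ j
        · rw [h0 j hj]; simp
        · push_neg at hj
          exact mul_nonpos_of_nonpos_of_nonneg hj.le (Complex.normSq_nonneg _)
    have hdzero : ∀ j, d j = 0 := by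
      intro j
      by_cases hj : 0 ≤ μ j
      · exact h0 j hj
      · push_neg at hj
        have h3 := hterm j (Finset.mem_univ j)
        rcases mul_eq_zero.mp h3 with h | h
        · exact absurd h hj.ne
        · exact Complex.normSq_eq_zero.mp h
    have hxzero : x = 0 := by
      rw [hxsum]
      refine Finset.sum_eq_zero fun j _ => ?_
      rw [hdzero j, zero_smul]
    funext v
    have h4 : x (v : V) = 0 := by rw [hxzero]; rfl
    simpa [hx, xof, v.2] using h4
  have h5 := LinearMap.finrank_le_finrank_of_injective hinj
  rw [Module.finrank_fintype_fun_eq_card, Module.finrank_fintype_fun_eq_card,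
    Fintype.card_coe, Fintype.card_coe] at h5
  exact h5

/-- For a Hermitian matrix `A` associated to a simple graph `G` (entries vanish off the
edges of `G`, including the diagonal), the independence number of `G` is at most
`min(n₊, n₋) + n₀`, where `n₊, n₋, n₀` count positive, negative, zero eigenvalues of `A`. -/
theorem stmt_0 {V : Type*} [Fintype V] [DecidableEq V]
    (G : SimpleGraph V) (A : Matrix V V ℂ) (hA : A.IsHermitian)
    (hoff : ∀ u v : V, u ≠ v → ¬ G.Adj u v → A u v = 0)
    (hdiag : ∀ v : V, A v v = 0) :
    alphaNum G ≤
      min (Finset.univ.filter fun v => 0 < hA.eigenvalues v).card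
          (Finset.univ.filter fun v => hA.eigenvalues v < 0).card
      + (Finset.univ.filter fun v => hA.eigenvalues v = 0).card := by
  classical
  set N := min (Finset.univ.filter fun v => 0 < hA.eigenvalues v).card
          (Finset.univ.filter fun v => hA.eigenvalues v < 0).card
      + (Finset.univ.filter fun v => hA.eigenvalues v = 0).card with hN
  have key : ∀ k ∈ {k | ∃ s : Finset V, (∀ u ∈ s, ∀ v ∈ s, ¬ G.Adj u v) ∧ s.card = k}, k ≤ N := by
    rintro k ⟨s, hind, rfl⟩
    have hs : ∀ a ∈ s, ∀ b ∈ s, A a b = 0 := by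
      intro a ha b hb
      rcases eq_or_ne a b with rfl | hne
      · exact hdiag a
      · exact hoff a b hne (hind a ha b hb)
    have hb1 : s.card ≤ (Finset.univ.filter fun i => 0 ≤ hA.eigenvalues i).card := by
      refine aux_inertia A hA.eigenvalues hA.eigenvectorBasis (fun i => ?_) s hs
      apply WithLp.ofLp_injective 2
      rw [Matrix.ofLp_toEuclideanLin_apply, hA.mulVec_eigenvectorBasis i]
      ext w
      simp [Complex.real_smul]
    have hb2 : s.card ≤ (Finset.univ.filter fun i => hA.eigenvalues i ≤ 0).card := by
      have h := aux_inertia (-A) (fun i => -hA.eigenvalues i) hA.eigenvectorBasis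
        (fun i => ?_) s (fun a ha b hb => by simp [hs a ha b hb])
      · convert h using 2
        ext i
        simp [neg_nonneg]
      · apply WithLp.ofLp_injective 2
        rw [Matrix.ofLp_toEuclideanLin_apply, Matrix.neg_mulVec,
          hA.mulVec_eigenvectorBasis i]
        ext w
        simp [Complex.real_smul]
    have hsplit1 : (Finset.univ.filter fun i => 0 ≤ hA.eigenvalues i).card
        = (Finset.univ.filter fun v => 0 < hA.eigenvalues v).card
          + (Finset.univ.filter fun v => hA.eigenvalues v = 0).card := by
      rw [← Finset.card_union_of_disjoint]
      · congr 1
        ext i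
        simp only [Finset.mem_union, Finset.mem_filter, Finset.mem_univ, true_and]
        constructor
        · intro h; rcases h.lt_or_eq with h' | h'; · exact Or.inl h'
          · exact Or.inr h'.symm
        · rintro (h | h); · exact h.le
          · exact h.ge
      · rw [Finset.disjoint_filter]
        intro i _ h1 h2
        exact absurd h2 h1.ne'
    have hsplit2 : (Finset.univ.filter fun i => hA.eigenvalues i ≤ 0).card
        = (Finset.univ.filter fun v => hA.eigenvalues v < 0).card
          + (Finset.univ.filter fun v => hA.eigenvalues v = 0).card := by
      rw [← Finset.card_union_of_disjoint]
      · congr 1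
        ext i
        simp only [Finset.mem_union, Finset.mem_filter, Finset.mem_univ, true_and]
        constructor
        · intro h; rcases h.lt_or_eq with h' | h'; · exact Or.inl h'
          · exact Or.inr h'
        · rintro (h | h); · exact h.le
          · exact h.le
      · rw [Finset.disjoint_filter]
        intro i _ h1 h2
        exact absurd h2 h1.ne
    rw [hN]
    rcases min_cases (Finset.univ.filter fun v => 0 < hA.eigenvalues v).card
      (Finset.univ.filter fun v => hA.eigenvalues v < 0).card with ⟨hm, _⟩ | ⟨hm, _⟩
    · rw [hm, ← hsplit1]; exact hb1
    · rw [hm, ← hsplit2]; exact hb2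
  exact csSup_le ⟨0, ∅, by simp⟩ key
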